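/- Let κ > 0, λ > 0, and β ∈ (1, 2). Let (a_i)_{i∈ℕ}, (μ_i)_{i∈ℕ}, (ζ_i)_{i∈ℕ} be real sequences with μ_i > 0 and ζ_i ≥ κ·μ_i for every i. Then, with sums taken in [0, ∞], Σ_{i} λ²·a_i² / ((λ + ζ_i)²·μ_i) ≤ (λ/κ)^{β−1} · Σ_{i} a_i² · μ_i^{−β}. -/

import Mathlib

/-- Spectral bound on the regularization bias: if `μ_i > 0` and `ζ_i ≥ κ μ_i`, then for
`β ∈ (1, 2)`, `Σ_i λ² a_i² / ((λ + ζ_i)² μ_i) ≤ (λ/κ)^{β−1} Σ_i a_i² μ_i^{−β}`,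
with sums taken in `[0, ∞]`. -/
theorem spectral_bias_bound
    (κ lam β : ℝ) (hκ : 0 < κ) (hlam : 0 < lam) (hβ : β ∈ Set.Ioo (1 : ℝ) 2)
    (a μ ζ : ℕ → ℝ) (hμ : ∀ i, 0 < μ i) (hζ : ∀ i, κ * μ i ≤ ζ i) :
    ∑' i, ENNReal.ofReal (lam ^ 2 * a i ^ 2 / ((lam + ζ i) ^ 2 * μ i)) ≤
      ENNReal.ofReal ((lam / κ) ^ (β - 1)) *
        ∑' i, ENNReal.ofReal (a i ^ 2 * μ i ^ (-β)) := by
  obtain ⟨hβ1, hβ2⟩ := hβ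
  set t := β - 1 with ht
  have ht0 : 0 < t := by simp [ht]; linarith
  have ht1 : t < 1 := by simp [ht]; linarith
  have key : ∀ i, lam ^ 2 * a i ^ 2 / ((lam + ζ i) ^ 2 * μ i) ≤
      (lam / κ) ^ (β - 1) * (a i ^ 2 * μ i ^ (-β)) := by
    intro i
    have hm : 0 < μ i := hμ i
    have hz : κ * μ i ≤ ζ i := hζ i
    have hz0 : 0 < ζ i := lt_of_lt_of_le (by positivity) hz
    have hlz : 0 < lam + ζ i := by linarith
    rw [div_le_iff₀ (by positivity)]
    have hmain : lam ^ 2 ≤ (lam / κ) ^ (β - 1) * μ i ^ (-β) * ((lam + ζ i) ^ 2 * μ i) := by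
      have hA : lam ^ ((2:ℝ) - t) ≤ (lam + ζ i) ^ ((2:ℝ) - t) :=
        Real.rpow_le_rpow hlam.le (by linarith) (by linarith)
      have hB : (κ * μ i) ^ t ≤ (lam + ζ i) ^ t :=
        Real.rpow_le_rpow (by positivity) (by linarith) ht0.le
      have hC : lam ^ ((2:ℝ) - t) * (κ * μ i) ^ t ≤ (lam + ζ i) ^ 2 := by
        calc lam ^ ((2:ℝ) - t) * (κ * μ i) ^ t
            ≤ (lam + ζ i) ^ ((2:ℝ) - t) * (lam + ζ i) ^ t :=
              mul_le_mul hA hB (Real.rpow_nonneg (by positivity) _)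
                (Real.rpow_nonneg hlz.le _)
          _ = (lam + ζ i) ^ (((2:ℝ) - t) + t) := (Real.rpow_add hlz _ _).symm
          _ = (lam + ζ i) ^ (2:ℝ) := by ring_nf
          _ = (lam + ζ i) ^ 2 := by
              rw [show (2:ℝ) = ((2:ℕ):ℝ) by norm_num, Real.rpow_natCast]
      have hmm : μ i ^ (-β) * μ i = μ i ^ (-t) := by
        nth_rewrite 2 [← Real.rpow_one (μ i)]
        rw [← Real.rpow_add hm]
        congr 1
        simp [ht]; ring
      have hE : (lam / κ) ^ t * μ i ^ (-t) * (lam ^ ((2:ℝ) - t) * (κ * μ i) ^ t)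
          = lam ^ 2 := by
        rw [Real.div_rpow hlam.le hκ.le, Real.mul_rpow hκ.le hm.le, Real.rpow_neg hm.le]
        have hl : lam ^ t * lam ^ ((2:ℝ) - t) = lam ^ 2 := by
          rw [← Real.rpow_add hlam, show t + ((2:ℝ) - t) = (2:ℝ) by ring,
            show (2:ℝ) = ((2:ℕ):ℝ) by norm_num, Real.rpow_natCast]
        have hκt : κ ^ t ≠ 0 := by positivity
        have hmt : (μ i) ^ t ≠ 0 := by positivity
        field_simp
        linear_combination hl
      calc lam ^ 2 = (lam / κ) ^ t * μ i ^ (-t) * (lam ^ ((2:ℝ) - t) * (κ * μ i) ^ t) :=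
            hE.symm
        _ ≤ (lam / κ) ^ t * μ i ^ (-t) * (lam + ζ i) ^ 2 := by
            apply mul_le_mul_of_nonneg_left hC
            positivity
        _ = (lam / κ) ^ (β - 1) * μ i ^ (-β) * ((lam + ζ i) ^ 2 * μ i) := by
            rw [← ht, ← hmm]; ring
    nlinarith [mul_le_mul_of_nonneg_left hmain (sq_nonneg (a i))]
  calc ∑' i, ENNReal.ofReal (lam ^ 2 * a i ^ 2 / ((lam + ζ i) ^ 2 * μ i))
      ≤ ∑' i, ENNReal.ofReal ((lam / κ) ^ (β - 1) * (a i ^ 2 * μ i ^ (-β))) :=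
        ENNReal.tsum_le_tsum fun i => ENNReal.ofReal_le_ofReal (key i)
    _ = ∑' i, ENNReal.ofReal ((lam / κ) ^ (β - 1)) * ENNReal.ofReal (a i ^ 2 * μ i ^ (-β)) := by
        congr 1; funext i
        exact ENNReal.ofReal_mul (Real.rpow_nonneg (by positivity) _)
    _ = ENNReal.ofReal ((lam / κ) ^ (β - 1)) * ∑' i, ENNReal.ofReal (a i ^ 2 * μ i ^ (-β)) :=
        ENNReal.tsum_mul_left
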